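/- Let A ∈ ℂ^{n×n}, H ∈ ℂ^{N×N}, W ∈ ℂ^{n×N}, u_0 ∈ ℂ^n and t ∈ ℝ. Let A_N be the block matrix [[A, W],[0, H]], let r_N(M) := Σ_{ℓ=N}^∞ M^ℓ/ℓ! and φ_m(M) := Σ_{k=0}^∞ M^k/(k+m)! (both series converge absolutely for any square matrix M). Then the first n entries of r_N(t A_N) applied to the stacked vector (u_0; e_1) satisfy: [I_n 0] r_N(t A_N)(u_0; e_1) = (tA)^N φ_N(tA) u_0 + Σ_{ℓ=1}^{N} t^ℓ (tA)^{N−ℓ} φ_N(tA) W H^{ℓ−1} e_1 + Σ_{ℓ=N+1}^∞ t^ℓ φ_ℓ(tA) W H^{ℓ−1} e_1. -/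

import Mathlib

/-- The first standard basis vector of `ℂ^N`. -/
noncomputable def e1C (N : ℕ) : Fin N → ℂ := fun j => if (j : ℕ) = 0 then 1 else 0

/-- The matrix φ-function `φ_m(M) = ∑_{k=0}^∞ M^k / (k+m)!`, defined by its
norm-convergent power series. -/
noncomputable def phiM {d : Type*} [Fintype d] [DecidableEq d] (m : ℕ)
    (M : Matrix d d ℂ) : Matrix d d ℂ :=
  ∑' k : ℕ, ((Nat.factorial (k + m) : ℂ))⁻¹ • M ^ k

/-- The `N`-th Taylor remainder of the matrix exponential,
`r_N(M) = ∑_{ℓ=N}^∞ M^ℓ / ℓ!`. -/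
noncomputable def rM {d : Type*} [Fintype d] [DecidableEq d] (N : ℕ)
    (M : Matrix d d ℂ) : Matrix d d ℂ :=
  ∑' k : ℕ, ((Nat.factorial (N + k) : ℂ))⁻¹ • M ^ (N + k)

namespace RemainderAux

open Matrix

set_option linter.unusedSectionVars false

/-- Powers of an upper block-triangular matrix. -/
lemma fromBlocks_pow {d e : Type*} [Fintype d] [DecidableEq d] [Fintype e] [DecidableEq e]
    (A' : Matrix d d ℂ) (W' : Matrix d e ℂ) (H' : Matrix e e ℂ) (m : ℕ) :
    (Matrix.fromBlocks A' W' 0 H') ^ m =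
      Matrix.fromBlocks (A' ^ m)
        (∑ j ∈ Finset.range m, A' ^ j * W' * H' ^ (m - 1 - j)) 0 (H' ^ m) := by
  induction m with
  | zero => simp [Matrix.fromBlocks_one]
  | succ m ih =>
    rw [pow_succ, ih, Matrix.fromBlocks_multiply]
    have htr : A' ^ m * W' + (∑ j ∈ Finset.range m, A' ^ j * W' * H' ^ (m - 1 - j)) * H'
        = ∑ j ∈ Finset.range (m + 1), A' ^ j * W' * H' ^ (m + 1 - 1 - j) := by
      rw [Finset.sum_range_succ]
      have h2 : m + 1 - 1 - m = 0 := by omega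
      rw [h2, pow_zero, Matrix.mul_one, Matrix.sum_mul, add_comm]
      congr 1
      refine Finset.sum_congr rfl fun j hj => ?_
      have hj' := Finset.mem_range.mp hj
      have h3 : m + 1 - 1 - j = (m - 1 - j) + 1 := by omega
      rw [h3, pow_succ, Matrix.mul_assoc]
    simp only [Matrix.mul_zero, Matrix.zero_mul, add_zero, zero_add, ← pow_succ]
    rw [htr]

attribute [local instance] Matrix.linftyOpSeminormedAddCommGroup
  Matrix.linftyOpNormedAddCommGroup Matrix.linftyOpNormedSpace Matrix.linftyOpIsBoundedSMul
  Matrix.linftyOpNonUnitalSemiNormedRing Matrix.linftyOpSemiNormedRing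
  Matrix.linftyOpNonUnitalNormedRing Matrix.linftyOpNormedRing Matrix.linftyOpNormedAlgebra

variable {d e : Type*} [Fintype d] [DecidableEq d] [Fintype e] [DecidableEq e]

lemma norm_pow_le_aux (B : Matrix d d ℂ) (k : ℕ) :
    ‖B ^ k‖ ≤ (1 + ‖(1 : Matrix d d ℂ)‖) * ‖B‖ ^ k := by
  cases k with
  | zero => simp
  | succ k =>
    refine (norm_pow_le' B k.succ_pos).trans ?_
    exact le_mul_of_one_le_left (by positivity) (by linarith [norm_nonneg (1 : Matrix d d ℂ)])

lemma summable_fact_smul_pow (m j : ℕ) (B : Matrix d d ℂ) :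
    Summable fun k : ℕ => ((Nat.factorial (k + m) : ℂ))⁻¹ • B ^ (j + k) := by
  have hb : Summable fun k : ℕ =>
      ((1 + ‖(1 : Matrix d d ℂ)‖) * ‖B‖ ^ j) * (‖B‖ ^ k / (Nat.factorial k)) :=
    (Real.summable_pow_div_factorial ‖B‖).mul_left _
  refine Summable.of_norm_bounded hb fun k => ?_
  rw [norm_smul, norm_inv, RCLike.norm_natCast]
  have h1 : ((Nat.factorial (k + m) : ℝ))⁻¹ ≤ ((Nat.factorial k : ℝ))⁻¹ := by
    apply inv_anti₀
    · exact_mod_cast Nat.factorial_pos k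
    · exact_mod_cast Nat.factorial_le (Nat.le_add_right k m)
  have h2 : ‖B ^ (j + k)‖ ≤ (1 + ‖(1 : Matrix d d ℂ)‖) * (‖B‖ ^ j * ‖B‖ ^ k) := by
    rw [← pow_add]; exact norm_pow_le_aux B (j + k)
  calc ((Nat.factorial (k + m) : ℝ))⁻¹ * ‖B ^ (j + k)‖
      ≤ ((Nat.factorial k : ℝ))⁻¹ * ((1 + ‖(1 : Matrix d d ℂ)‖) * (‖B‖ ^ j * ‖B‖ ^ k)) := by
        apply mul_le_mul h1 h2 (norm_nonneg _)
        positivity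
    _ = (1 + ‖(1 : Matrix d d ℂ)‖) * ‖B‖ ^ j * (‖B‖ ^ k / (Nat.factorial k)) := by
        field_simp

noncomputable def mulVecCLM (v : e → ℂ) : Matrix d e ℂ →L[ℂ] (d → ℂ) :=
  LinearMap.toContinuousLinearMap
    { toFun := fun P => P *ᵥ v
      map_add' := fun P Q => Matrix.add_mulVec P Q v
      map_smul' := fun c P => Matrix.smul_mulVec c P v }

@[simp] lemma mulVecCLM_apply (v : e → ℂ) (P : Matrix d e ℂ) :
    mulVecCLM v P = P *ᵥ v := rfl

noncomputable def vecMulCLM (B : Matrix d e ℂ) : (e → ℂ) →L[ℂ] (d → ℂ) :=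
  LinearMap.toContinuousLinearMap B.mulVecLin

@[simp] lemma vecMulCLM_apply (B : Matrix d e ℂ) (v : e → ℂ) :
    vecMulCLM B v = B *ᵥ v := rfl

noncomputable def inlCLM (n N : ℕ) : ((Fin n ⊕ Fin N) → ℂ) →L[ℂ] (Fin n → ℂ) :=
  LinearMap.toContinuousLinearMap (LinearMap.funLeft ℂ ℂ Sum.inl)

@[simp] lemma inlCLM_apply (n N : ℕ) (w : (Fin n ⊕ Fin N) → ℂ) :
    inlCLM n N w = fun i => w (Sum.inl i) := rfl

lemma summable_fact_smul_pow_mulVec (m j : ℕ) (B : Matrix d d ℂ) (v : d → ℂ) :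
    Summable fun k : ℕ => ((Nat.factorial (k + m) : ℂ))⁻¹ • (B ^ (j + k)) *ᵥ v := by
  have h := (summable_fact_smul_pow m j B).map (mulVecCLM (d := d) v)
    (mulVecCLM (d := d) v).continuous
  refine h.congr fun k => ?_
  simp [_root_.map_smul]

lemma phi_mulVec (m j : ℕ) (B : Matrix d d ℂ) (v : d → ℂ) :
    (B ^ j * phiM m B) *ᵥ v
      = ∑' k : ℕ, ((Nat.factorial (k + m) : ℂ))⁻¹ • (B ^ (j + k)) *ᵥ v := by
  have hs : Summable fun k : ℕ => ((Nat.factorial (k + m) : ℂ))⁻¹ • B ^ k := by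
    have := summable_fact_smul_pow (d := d) m 0 B
    simpa using this
  have h1 : (phiM m B) *ᵥ v
      = ∑' k : ℕ, ((Nat.factorial (k + m) : ℂ))⁻¹ • (B ^ k) *ᵥ v := by
    have h := (mulVecCLM (d := d) v).map_tsum hs
    simpa [_root_.map_smul, phiM] using h
  have hs2 : Summable fun k : ℕ => ((Nat.factorial (k + m) : ℂ))⁻¹ • (B ^ k) *ᵥ v := by
    have := summable_fact_smul_pow_mulVec (d := d) m 0 B v
    simpa using this
  calc (B ^ j * phiM m B) *ᵥ v = (B ^ j) *ᵥ ((phiM m B) *ᵥ v) := by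
        rw [Matrix.mulVec_mulVec]
    _ = vecMulCLM (B ^ j) (∑' k : ℕ, ((Nat.factorial (k + m) : ℂ))⁻¹ • (B ^ k) *ᵥ v) := by
        rw [h1]; rfl
    _ = ∑' k : ℕ, vecMulCLM (B ^ j) (((Nat.factorial (k + m) : ℂ))⁻¹ • (B ^ k) *ᵥ v) :=
        (vecMulCLM (B ^ j)).map_tsum hs2
    _ = ∑' k : ℕ, ((Nat.factorial (k + m) : ℂ))⁻¹ • (B ^ (j + k)) *ᵥ v := by
        refine tsum_congr fun k => ?_
        rw [_root_.map_smul, vecMulCLM_apply, Matrix.mulVec_mulVec, ← pow_add]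

/-- The triangular double-sum exchange. -/
lemma triangle_tsum (Nn : ℕ) (B : Matrix d d ℂ) (v : ℕ → (d → ℂ)) (Cv rv : ℝ)
    (hCv : 0 ≤ Cv) (hrv : 0 ≤ rv) (hv : ∀ q : ℕ, ‖v q‖ ≤ Cv * rv ^ q) :
    ∑' k : ℕ, ((Nat.factorial (k + Nn) : ℂ))⁻¹ •
        ∑ q ∈ Finset.range k, (B ^ (k - 1 - q)) *ᵥ v q
      = ∑' q : ℕ, (phiM (Nn + 1 + q) B) *ᵥ v q := by
  classical
  set F : ℕ × ℕ → (d → ℂ) := fun kp =>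
    if kp.2 < kp.1 then
      ((Nat.factorial (kp.1 + Nn) : ℂ))⁻¹ • (B ^ (kp.1 - 1 - kp.2)) *ᵥ v kp.2 else 0 with hF
  set G : ℕ × ℕ → (d → ℂ) := fun qj =>
    ((Nat.factorial (qj.1 + 1 + qj.2 + Nn) : ℂ))⁻¹ • (B ^ qj.2) *ᵥ v qj.1 with hG
  set emb : ℕ × ℕ → ℕ × ℕ := fun qj => (qj.1 + 1 + qj.2, qj.1) with hemb
  have hinj : Function.Injective emb := by
    intro a b h
    simp only [hemb, Prod.mk.injEq] at h
    obtain ⟨h1, h2⟩ := h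
    exact Prod.ext h2 (by omega)
  have hFemb : ∀ qj : ℕ × ℕ, F (emb qj) = G qj := by
    rintro ⟨q, j⟩
    simp only [hF, hG, hemb]
    rw [if_pos (by omega : q < q + 1 + j)]
    have h1 : q + 1 + j - 1 - q = j := by omega
    rw [h1]
  have hvanish : ∀ x : ℕ × ℕ, x ∉ Set.range emb → F x = 0 := by
    rintro ⟨k, p⟩ hx
    by_cases hpk : p < k
    · refine absurd ⟨(p, k - 1 - p), ?_⟩ hx
      simp only [hemb]
      have h5 : p + 1 + (k - 1 - p) = k := by omega
      rw [h5]
    · simp only [hF]; exact if_neg hpk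
  have hGsum : Summable G := by
    have hf : Summable fun q : ℕ => Cv * (rv ^ q / (Nat.factorial q)) :=
      (Real.summable_pow_div_factorial rv).mul_left _
    have hg : Summable fun j : ℕ =>
        (1 + ‖(1 : Matrix d d ℂ)‖) * (‖B‖ ^ j / (Nat.factorial j)) :=
      (Real.summable_pow_div_factorial ‖B‖).mul_left _
    refine Summable.of_norm_bounded
      (hf.mul_of_nonneg hg (fun q => by positivity) (fun j => by positivity)) ?_
    rintro ⟨q, j⟩
    have h1 : ((Nat.factorial q : ℝ) * (Nat.factorial j : ℝ))
        ≤ (Nat.factorial (q + 1 + j + Nn) : ℝ) := by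
      have l1 : Nat.factorial q * Nat.factorial j ≤ Nat.factorial (q + j) :=
        Nat.le_of_dvd (Nat.factorial_pos _) (Nat.factorial_mul_factorial_dvd_factorial_add q j)
      have l2 : Nat.factorial (q + j) ≤ Nat.factorial (q + 1 + j + Nn) :=
        Nat.factorial_le (by omega)
      exact_mod_cast le_trans l1 l2
    have hpos : (0 : ℝ) < (Nat.factorial q : ℝ) * (Nat.factorial j : ℝ) := by
      have := Nat.factorial_pos q
      have := Nat.factorial_pos j
      positivity
    have h2 : ‖(B ^ j) *ᵥ v q‖ ≤ ((1 + ‖(1 : Matrix d d ℂ)‖) * ‖B‖ ^ j) * (Cv * rv ^ q) := by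
      calc ‖(B ^ j) *ᵥ v q‖ ≤ ‖B ^ j‖ * ‖v q‖ := Matrix.linfty_opNorm_mulVec _ _
        _ ≤ ((1 + ‖(1 : Matrix d d ℂ)‖) * ‖B‖ ^ j) * (Cv * rv ^ q) :=
          mul_le_mul (norm_pow_le_aux B j) (hv q) (norm_nonneg _) (by positivity)
    calc ‖G (q, j)‖
        = ((Nat.factorial (q + 1 + j + Nn) : ℝ))⁻¹ * ‖(B ^ j) *ᵥ v q‖ := by
          simp only [hG]
          rw [norm_smul, norm_inv, RCLike.norm_natCast]
      _ ≤ ((Nat.factorial q : ℝ) * (Nat.factorial j : ℝ))⁻¹ *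
            (((1 + ‖(1 : Matrix d d ℂ)‖) * ‖B‖ ^ j) * (Cv * rv ^ q)) := by
          apply mul_le_mul (inv_anti₀ hpos h1) h2 (norm_nonneg _) (by positivity)
      _ = (Cv * (rv ^ q / (Nat.factorial q))) *
            ((1 + ‖(1 : Matrix d d ℂ)‖) * (‖B‖ ^ j / (Nat.factorial j))) := by
          rw [mul_inv]; ring
  have hFsum : Summable F :=
    (hinj.summable_iff hvanish).mp (hGsum.congr fun qj => (hFemb qj).symm)
  have htsum_eq : ∑' qj : ℕ × ℕ, F (emb qj) = ∑' x : ℕ × ℕ, F x := by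
    refine hinj.tsum_eq ?_
    intro x hx
    by_contra hmem
    exact hx (hvanish x hmem)
  calc ∑' k : ℕ, ((Nat.factorial (k + Nn) : ℂ))⁻¹ •
          ∑ q ∈ Finset.range k, (B ^ (k - 1 - q)) *ᵥ v q
      = ∑' k : ℕ, ∑' p : ℕ, F (k, p) := by
        refine tsum_congr fun k => ?_
        rw [Finset.smul_sum]
        rw [tsum_eq_sum (s := Finset.range k)
          (fun p hp => by simp only [hF]; exact if_neg (by simpa using hp))]
        refine Finset.sum_congr rfl fun p hp => ?_
        simp only [hF]
        rw [if_pos (Finset.mem_range.mp hp)]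
    _ = ∑' x : ℕ × ℕ, F x := (Summable.tsum_prod' hFsum fun k => hFsum.prod_factor k).symm
    _ = ∑' qj : ℕ × ℕ, F (emb qj) := htsum_eq.symm
    _ = ∑' qj : ℕ × ℕ, G qj := tsum_congr hFemb
    _ = ∑' q : ℕ, ∑' j : ℕ, G (q, j) := Summable.tsum_prod' hGsum fun q => hGsum.prod_factor q
    _ = ∑' q : ℕ, (phiM (Nn + 1 + q) B) *ᵥ v q := by
        refine tsum_congr fun q => ?_
        have h := phi_mulVec (Nn + 1 + q) 0 B (v q)
        rw [pow_zero, Matrix.one_mul] at h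
        rw [h]
        refine tsum_congr fun j => ?_
        simp only [hG]
        have h1 : q + 1 + j + Nn = j + (Nn + 1 + q) := by omega
        rw [h1, zero_add]

theorem aux (n N : ℕ) (A : Matrix (Fin n) (Fin n) ℂ)
    (H : Matrix (Fin N) (Fin N) ℂ) (W : Matrix (Fin n) (Fin N) ℂ)
    (u0 : Fin n → ℂ) (t : ℝ) :
    (fun i : Fin n =>
        (rM N ((t : ℂ) • Matrix.fromBlocks A W 0 H)).mulVec (Sum.elim u0 (e1C N)) (Sum.inl i)) =
      (((t : ℂ) • A) ^ N * phiM N ((t : ℂ) • A)).mulVec u0 +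
        (∑ l ∈ Finset.range N, ((t : ℂ) ^ (l + 1)) •
          ((((t : ℂ) • A) ^ (N - (l + 1)) * phiM N ((t : ℂ) • A)).mulVec
            (W.mulVec ((H ^ l).mulVec (e1C N))))) +
        ∑' k : ℕ, ((t : ℂ) ^ (N + 1 + k)) •
          ((phiM (N + 1 + k) ((t : ℂ) • A)).mulVec
            (W.mulVec ((H ^ (N + k)).mulVec (e1C N)))) := by
  classical
  set A' : Matrix (Fin n) (Fin n) ℂ := (t : ℂ) • A with hA'
  set W' : Matrix (Fin n) (Fin N) ℂ := (t : ℂ) • W with hW'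
  set H' : Matrix (Fin N) (Fin N) ℂ := (t : ℂ) • H with hH'
  set v0 : (Fin n ⊕ Fin N) → ℂ := Sum.elim u0 (e1C N) with hv0
  set vv : ℕ → (Fin n → ℂ) := fun l => W' *ᵥ ((H' ^ l) *ᵥ (e1C N)) with hvv
  have hM : (t : ℂ) • Matrix.fromBlocks A W 0 H = Matrix.fromBlocks A' W' 0 H' := by
    rw [hA', hW', hH', Matrix.fromBlocks_smul, smul_zero]
  have hvvt : ∀ l : ℕ, vv l = ((t : ℂ) ^ (l + 1)) • (W *ᵥ ((H ^ l) *ᵥ (e1C N))) := by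
    intro l
    simp only [hvv, hH', hW', smul_pow, Matrix.smul_mulVec, Matrix.mulVec_smul, smul_smul]
    rw [pow_succ]
  -- first `n` entries of powers applied to the stacked vector
  have hLterm : ∀ m : ℕ,
      (fun i : Fin n => (((Matrix.fromBlocks A' W' 0 H') ^ m) *ᵥ v0) (Sum.inl i))
        = (A' ^ m) *ᵥ u0 + ∑ p ∈ Finset.range m, (A' ^ (m - 1 - p)) *ᵥ vv p := by
    intro m
    have hQ : (∑ j ∈ Finset.range m, A' ^ j * W' * H' ^ (m - 1 - j)) *ᵥ (e1C N)
        = ∑ p ∈ Finset.range m, (A' ^ (m - 1 - p)) *ᵥ vv p := by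
      have h1 : (∑ j ∈ Finset.range m, A' ^ j * W' * H' ^ (m - 1 - j)) *ᵥ (e1C N)
          = ∑ j ∈ Finset.range m, (A' ^ j * W' * H' ^ (m - 1 - j)) *ᵥ (e1C N) :=
        map_sum (mulVecCLM (e1C N)) _ (Finset.range m)
      rw [h1]
      have h2 : ∀ j ∈ Finset.range m, (A' ^ j * W' * H' ^ (m - 1 - j)) *ᵥ (e1C N)
          = (A' ^ j) *ᵥ vv (m - 1 - j) := by
        intro j hj
        rw [← Matrix.mulVec_mulVec, ← Matrix.mulVec_mulVec]
      rw [Finset.sum_congr rfl h2]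
      have h3 := Finset.sum_range_reflect (fun p => (A' ^ (m - 1 - p)) *ᵥ vv p) m
      rw [← h3]
      refine Finset.sum_congr rfl fun j hj => ?_
      have h4 : m - 1 - (m - 1 - j) = j := by
        have := Finset.mem_range.mp hj; omega
      rw [h4]
    rw [fromBlocks_pow]
    funext i
    rw [hv0, Matrix.fromBlocks_mulVec]
    simp only [Sum.elim_inl, Sum.elim_comp_inl, Sum.elim_comp_inr]
    rw [hQ]
  -- summability facts
  have hsAllM : Summable fun k : ℕ => ((Nat.factorial (N + k) : ℂ))⁻¹ •
      (Matrix.fromBlocks A' W' 0 H') ^ (N + k) :=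
    (summable_fact_smul_pow N N _).congr (fun k => by rw [Nat.add_comm k N])
  have hs1 : Summable fun k : ℕ => ((Nat.factorial (k + N) : ℂ))⁻¹ • (A' ^ (N + k)) *ᵥ u0 :=
    summable_fact_smul_pow_mulVec N N A' u0
  have hsAll : Summable fun k : ℕ => ((Nat.factorial (k + N) : ℂ))⁻¹ •
      ((A' ^ (N + k)) *ᵥ u0 + ∑ p ∈ Finset.range (N + k), (A' ^ (N + k - 1 - p)) *ᵥ vv p) := by
    have h := (summable_fact_smul_pow N N (Matrix.fromBlocks A' W' 0 H')).map
      ((inlCLM n N).comp (mulVecCLM v0)) (ContinuousLinearMap.continuous _)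
    refine h.congr fun k => ?_
    simp only [Function.comp_apply]
    rw [_root_.map_smul]
    congr 1
    exact hLterm (N + k)
  have heqk : ∀ k : ℕ, ((Nat.factorial (k + N) : ℂ))⁻¹ •
      ((A' ^ (N + k)) *ᵥ u0 + ∑ p ∈ Finset.range (N + k), (A' ^ (N + k - 1 - p)) *ᵥ vv p)
      = ((Nat.factorial (k + N) : ℂ))⁻¹ • (A' ^ (N + k)) *ᵥ u0
        + (∑ p ∈ Finset.range N,
            ((Nat.factorial (k + N) : ℂ))⁻¹ • (A' ^ ((N - 1 - p) + k)) *ᵥ vv p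
          + ((Nat.factorial (k + N) : ℂ))⁻¹ •
            ∑ q ∈ Finset.range k, (A' ^ (k - 1 - q)) *ᵥ vv (N + q)) := by
    intro k
    rw [smul_add]
    congr 1
    rw [Finset.sum_range_add (fun p => (A' ^ (N + k - 1 - p)) *ᵥ vv p) N k, smul_add]
    congr 1
    · rw [Finset.smul_sum]
      refine Finset.sum_congr rfl fun p hp => ?_
      have h : N + k - 1 - p = (N - 1 - p) + k := by
        have := Finset.mem_range.mp hp; omega
      rw [h]
    · congr 1
      refine Finset.sum_congr rfl fun q hq => ?_
      have h : N + k - 1 - (N + q) = k - 1 - q := by omega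
      rw [h]
  have hsa : Summable fun k : ℕ => ∑ p ∈ Finset.range N,
      ((Nat.factorial (k + N) : ℂ))⁻¹ • (A' ^ ((N - 1 - p) + k)) *ᵥ vv p :=
    summable_sum fun p _ => summable_fact_smul_pow_mulVec N (N - 1 - p) A' (vv p)
  have hsb : Summable fun k : ℕ => ((Nat.factorial (k + N) : ℂ))⁻¹ •
      ∑ q ∈ Finset.range k, (A' ^ (k - 1 - q)) *ᵥ vv (N + q) := by
    refine ((hsAll.congr heqk).sub (hs1.add hsa)).congr fun k => ?_
    abel
  -- norm bound for the tail vectors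
  have hvnorm : ∀ q : ℕ, ‖vv (N + q)‖ ≤
      (‖W'‖ * ((1 + ‖(1 : Matrix (Fin N) (Fin N) ℂ)‖) * ‖H'‖ ^ N) * ‖e1C N‖) * ‖H'‖ ^ q := by
    intro q
    have hb : ‖H' ^ (N + q)‖ ≤ (1 + ‖(1 : Matrix (Fin N) (Fin N) ℂ)‖) * (‖H'‖ ^ N * ‖H'‖ ^ q) := by
      rw [← pow_add]; exact norm_pow_le_aux H' (N + q)
    calc ‖vv (N + q)‖ = ‖W' *ᵥ ((H' ^ (N + q)) *ᵥ e1C N)‖ := by rw [hvv]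
      _ ≤ ‖W'‖ * ‖(H' ^ (N + q)) *ᵥ e1C N‖ := Matrix.linfty_opNorm_mulVec _ _
      _ ≤ ‖W'‖ * (‖H' ^ (N + q)‖ * ‖e1C N‖) := by
          have h := Matrix.linfty_opNorm_mulVec (H' ^ (N + q)) (e1C N)
          exact mul_le_mul_of_nonneg_left h (norm_nonneg _)
      _ ≤ ‖W'‖ * (((1 + ‖(1 : Matrix (Fin N) (Fin N) ℂ)‖) * (‖H'‖ ^ N * ‖H'‖ ^ q)) * ‖e1C N‖) := by
          have h := mul_le_mul_of_nonneg_right hb (norm_nonneg (e1C N))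
          exact mul_le_mul_of_nonneg_left h (norm_nonneg _)
      _ = (‖W'‖ * ((1 + ‖(1 : Matrix (Fin N) (Fin N) ℂ)‖) * ‖H'‖ ^ N) * ‖e1C N‖) * ‖H'‖ ^ q := by
          ring
  -- the three pieces
  have hT1 : ∑' k : ℕ, ((Nat.factorial (k + N) : ℂ))⁻¹ • (A' ^ (N + k)) *ᵥ u0
      = (A' ^ N * phiM N A') *ᵥ u0 := (phi_mulVec N N A' u0).symm
  have hT2 : ∑' k : ℕ, ∑ p ∈ Finset.range N,
        ((Nat.factorial (k + N) : ℂ))⁻¹ • (A' ^ ((N - 1 - p) + k)) *ᵥ vv p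
      = ∑ l ∈ Finset.range N, ((t : ℂ) ^ (l + 1)) •
          ((A' ^ (N - (l + 1)) * phiM N A') *ᵥ (W *ᵥ ((H ^ l) *ᵥ (e1C N)))) := by
    rw [Summable.tsum_finsetSum fun p _ => summable_fact_smul_pow_mulVec N (N - 1 - p) A' (vv p)]
    refine Finset.sum_congr rfl fun p hp => ?_
    rw [← phi_mulVec N (N - 1 - p) A' (vv p)]
    rw [hvvt p, Matrix.mulVec_smul]
    have h : N - 1 - p = N - (p + 1) := by omega
    rw [h]
  have hT3 : ∑' k : ℕ, ((Nat.factorial (k + N) : ℂ))⁻¹ •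
        ∑ q ∈ Finset.range k, (A' ^ (k - 1 - q)) *ᵥ vv (N + q)
      = ∑' k : ℕ, ((t : ℂ) ^ (N + 1 + k)) •
          ((phiM (N + 1 + k) A') *ᵥ (W *ᵥ ((H ^ (N + k)) *ᵥ (e1C N)))) := by
    rw [triangle_tsum N A' (fun q => vv (N + q)) _ _ (by positivity) (norm_nonneg _) hvnorm]
    refine tsum_congr fun q => ?_
    rw [hvvt (N + q), Matrix.mulVec_smul]
    have h : N + q + 1 = N + 1 + q := by omega
    rw [h]
  -- assemble
  rw [hM]
  calc (fun i : Fin n => ((rM N (Matrix.fromBlocks A' W' 0 H')) *ᵥ v0) (Sum.inl i))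
      = ((inlCLM n N).comp (mulVecCLM v0)) (∑' k : ℕ, ((Nat.factorial (N + k) : ℂ))⁻¹ •
          (Matrix.fromBlocks A' W' 0 H') ^ (N + k)) := rfl
    _ = ∑' k : ℕ, ((inlCLM n N).comp (mulVecCLM v0)) (((Nat.factorial (N + k) : ℂ))⁻¹ •
          (Matrix.fromBlocks A' W' 0 H') ^ (N + k)) :=
        ContinuousLinearMap.map_tsum _ hsAllM
    _ = ∑' k : ℕ, ((Nat.factorial (k + N) : ℂ))⁻¹ •
          ((A' ^ (N + k)) *ᵥ u0 + ∑ p ∈ Finset.range (N + k), (A' ^ (N + k - 1 - p)) *ᵥ vv p) := by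
        refine tsum_congr fun k => ?_
        rw [_root_.map_smul]
        have h : Nat.factorial (N + k) = Nat.factorial (k + N) := by rw [Nat.add_comm]
        rw [h]
        congr 1
        exact hLterm (N + k)
    _ = (∑' k : ℕ, ((Nat.factorial (k + N) : ℂ))⁻¹ • (A' ^ (N + k)) *ᵥ u0)
        + ∑' k : ℕ, (∑ p ∈ Finset.range N,
            ((Nat.factorial (k + N) : ℂ))⁻¹ • (A' ^ ((N - 1 - p) + k)) *ᵥ vv p
          + ((Nat.factorial (k + N) : ℂ))⁻¹ •
            ∑ q ∈ Finset.range k, (A' ^ (k - 1 - q)) *ᵥ vv (N + q)) := by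
        rw [← Summable.tsum_add hs1 (hsa.add hsb)]
        exact tsum_congr heqk
    _ = (∑' k : ℕ, ((Nat.factorial (k + N) : ℂ))⁻¹ • (A' ^ (N + k)) *ᵥ u0)
        + ((∑' k : ℕ, ∑ p ∈ Finset.range N,
            ((Nat.factorial (k + N) : ℂ))⁻¹ • (A' ^ ((N - 1 - p) + k)) *ᵥ vv p)
          + ∑' k : ℕ, ((Nat.factorial (k + N) : ℂ))⁻¹ •
            ∑ q ∈ Finset.range k, (A' ^ (k - 1 - q)) *ᵥ vv (N + q)) := by
        rw [Summable.tsum_add hsa hsb]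
    _ = (A' ^ N * phiM N A') *ᵥ u0 +
        ((∑ l ∈ Finset.range N, ((t : ℂ) ^ (l + 1)) •
          ((A' ^ (N - (l + 1)) * phiM N A') *ᵥ (W *ᵥ ((H ^ l) *ᵥ (e1C N)))))
          + ∑' k : ℕ, ((t : ℂ) ^ (N + 1 + k)) •
            ((phiM (N + 1 + k) A') *ᵥ (W *ᵥ ((H ^ (N + k)) *ᵥ (e1C N))))) := by
        rw [hT1, hT2, hT3]
    _ = _ := by rw [← add_assoc]

end RemainderAux

/-- Expression for the first `n` entries of the exponential remainder applied to the stacked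
vector: with `A_N = [[A, W], [0, H]]`,
`[Iₙ 0] r_N(t A_N)(u₀; e₁) = (tA)^N φ_N(tA) u₀ + ∑_{ℓ=1}^N t^ℓ (tA)^{N-ℓ} φ_N(tA) W H^{ℓ-1} e₁
  + ∑_{ℓ=N+1}^∞ t^ℓ φ_ℓ(tA) W H^{ℓ-1} e₁`. -/
theorem remainder_block_expression (n N : ℕ) (A : Matrix (Fin n) (Fin n) ℂ)
    (H : Matrix (Fin N) (Fin N) ℂ) (W : Matrix (Fin n) (Fin N) ℂ)
    (u0 : Fin n → ℂ) (t : ℝ) :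
    (fun i : Fin n =>
        (rM N ((t : ℂ) • Matrix.fromBlocks A W 0 H)).mulVec (Sum.elim u0 (e1C N)) (Sum.inl i)) =
      (((t : ℂ) • A) ^ N * phiM N ((t : ℂ) • A)).mulVec u0 +
        (∑ l ∈ Finset.range N, ((t : ℂ) ^ (l + 1)) •
          ((((t : ℂ) • A) ^ (N - (l + 1)) * phiM N ((t : ℂ) • A)).mulVec
            (W.mulVec ((H ^ l).mulVec (e1C N))))) +
        ∑' k : ℕ, ((t : ℂ) ^ (N + 1 + k)) •
          ((phiM (N + 1 + k) ((t : ℂ) • A)).mulVec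
            (W.mulVec ((H ^ (N + k)).mulVec (e1C N)))) := by
  exact RemainderAux.aux n N A H W u0 t
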